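/- The well-foundedness operator: let R be a binary relation on a type A and define F : Set A → Set A by F(P) = { a | ∀ b, R b a → b ∈ P }. Then F is monotone; its least fixed point is { a | Acc R a }, the set of R-accessible elements; and for every ordinal α the stage F^α(∅) equals { a | ∃ h : Acc R a, rank(h) < α }, where rank(h) denotes the ordinal rank of the accessibility proof h (Mathlib's Acc.rank). -/

import Mathlib

open OrdinalApprox

universe u

/-- **The well-foundedness operator.** For a binary relation `R` on `A`, the operator
`F(P) = { a | ∀ b, R b a → b ∈ P }` is monotone; its least fixed point is the set of
`R`-accessible elements; and its `α`-th stage is the set of elements whose accessibility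
proof has ordinal rank `< α`. -/
theorem wellFoundedness_operator {A : Type u} (R : A → A → Prop) (F : Set A → Set A)
    (hFdef : F = fun P => { a : A | ∀ b : A, R b a → b ∈ P }) :
    ∃ hF : Monotone F,
      OrderHom.lfp ⟨F, hF⟩ = { a : A | Acc R a } ∧
      ∀ α : Ordinal.{u},
        lfpApprox ⟨F, hF⟩ ⊥ α = { a : A | ∃ h : Acc R a, h.rank < α } := by
  subst hFdef
  have hF : Monotone (fun P : Set A => { a : A | ∀ b : A, R b a → b ∈ P }) := by
    intro P Q hPQ a ha b hb
    exact hPQ (ha b hb)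
  refine ⟨hF, ?_, ?_⟩
  · apply le_antisymm
    · apply OrderHom.lfp_le
      intro a ha
      exact Acc.intro a ha
    · intro a ha
      induction ha with
      | intro a h ih =>
        have := OrderHom.map_lfp (⟨_, hF⟩ : Set A →o Set A)
        rw [← this]
        exact ih
  · intro α
    induction α using Ordinal.induction with
    | h α ih =>
      ext a
      rw [lfpApprox]
      simp only [Set.sup_eq_union, Set.iSup_eq_iUnion, Set.mem_union, Set.mem_setOf_eq,
        Set.mem_singleton_iff, Set.mem_iUnion]
      constructor
      · rintro (has | ⟨β, hβ, has⟩)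
        · exact absurd has (Set.notMem_empty a)
        · rw [ih β hβ] at has
          have hmem : ∀ b, R b a → ∃ hb : Acc R b, hb.rank < β := has
          have hacc : Acc R a := Acc.intro a fun b hb => (hmem b hb).elim fun h _ => h
          refine ⟨hacc, lt_of_le_of_lt ?_ hβ⟩
          rw [Acc.rank_eq]
          apply Ordinal.iSup_le
          rintro ⟨b, hb⟩
          obtain ⟨h', hr⟩ := hmem b hb
          rw [Order.succ_le_iff]
          rwa [proof_irrel (hacc.inv hb) h']
      · rintro ⟨h, hr⟩
        refine Or.inr ⟨h.rank, hr, ?_⟩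
        rw [ih h.rank hr]
        intro b hb
        exact ⟨h.inv hb, h.rank_lt_of_rel hb⟩
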